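/- Let δ: Q₁ → G be an arrow weighting and Q ⋊ G the associated smash coproduct quiver. The right action of G on Q ⋊ G given by (u ⋊ g)·h = u ⋊ gh (for u a vertex or arrow) is a free action by quiver automorphisms, and the orbit quiver (Q ⋊ G)/G is isomorphic to Q. -/

import Mathlib

open TensorProduct Quiver

noncomputable section
open scoped Classical

universe u v

variable (k : Type*) [Field k]

/-- The set of all paths in a quiver, with endpoints bundled. -/
abbrev PathsIn (V : Type u) [Quiver.{v + 1} V] : Type (max u (v + 1)) := Σ a b : V, Quiver.Path a b

/-- The underlying vector space of the path coalgebra: the free `k`-module on paths. -/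
abbrev PathCoalg (V : Type u) [Quiver.{v + 1} V] : Type _ := PathsIn V →₀ k

variable {V : Type u} [Quiver.{v + 1} V]

/-- The basis vector corresponding to a path. -/
def ιp (t : PathsIn V) : PathCoalg k V := Finsupp.single t 1

/-- The linear map on the path coalgebra induced by appending the arrow `e` to
paths ending at the source of `e` (and killing all other paths). -/
def consMap {b c : V} (e : b ⟶ c) : PathCoalg k V →ₗ[k] PathCoalg k V :=
  Finsupp.lsum k fun t =>
    if h : t.2.1 = b then Finsupp.lsingle ⟨t.1, c, (h ▸ t.2.2).cons e⟩ else 0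

/-- Comultiplication on basis paths:
`Δ(p) = Σ_{p = p₂p₁} p₂ ⊗ p₁ + t(p) ⊗ p + p ⊗ s(p)`, i.e. the sum of
`(second segment) ⊗ (first segment)` over all (possibly trivial) decompositions. -/
def deltaAux : ∀ {a b : V}, Quiver.Path a b → PathCoalg k V ⊗[k] PathCoalg k V
  | a, _, .nil => ιp k ⟨a, a, .nil⟩ ⊗ₜ[k] ιp k ⟨a, a, .nil⟩
  | a, c, .cons p e =>
      ιp k ⟨c, c, .nil⟩ ⊗ₜ[k] ιp k ⟨a, c, p.cons e⟩
      + TensorProduct.map (consMap k e) LinearMap.id (deltaAux p)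

/-- The comultiplication of the path coalgebra. -/
def ΔP : PathCoalg k V →ₗ[k] PathCoalg k V ⊗[k] PathCoalg k V :=
  Finsupp.lsum k fun t => LinearMap.toSpanSingleton k _ (deltaAux k t.2.2)

/-- The counit of the path coalgebra: `ε(p) = δ_{|p|,0}`. -/
def εP : PathCoalg k V →ₗ[k] k :=
  Finsupp.lsum k fun t => if t.2.2.length = 0 then LinearMap.id else 0

variable {G : Type*} [Group G]

/-- The multiplicative extension of an arrow weighting `δ : Q₁ → G` to paths:
`δ(a_n ⋯ a_1) = δ(a_n) ⋯ δ(a_1)`, with value `1` on length-zero paths. -/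
def wt (δ : ∀ {a b : V}, (a ⟶ b) → G) : ∀ {a b : V}, Quiver.Path a b → G
  | _, _, .nil => 1
  | _, _, .cons p e => δ e * wt @δ p

/-- The smash coproduct quiver `Q ⋊ G` attached to an arrow weighting
`δ : Q₁ → G`: vertices are pairs `x ⋊ g`. -/
structure SmashQ (V : Type u) [Quiver.{v + 1} V] (G : Type*) [Group G]
    (δ : ∀ {a b : V}, (a ⟶ b) → G) where
  v : V
  g : G

/-- Arrows of `Q ⋊ G`: `a ⋊ g` goes from `s(a) ⋊ g` to `t(a) ⋊ δ(a)g`. -/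
instance {δ : ∀ {a b : V}, (a ⟶ b) → G} : Quiver (SmashQ V G @δ) :=
  ⟨fun p q => {e : p.v ⟶ q.v // q.g = δ e * p.g}⟩

variable {δ : ∀ {a b : V}, (a ⟶ b) → G}

/-- The right action of `h ∈ G` on the vertices of `Q ⋊ G`: `(x ⋊ g)·h = x ⋊ gh`. -/
def actV (δ : ∀ {a b : V}, (a ⟶ b) → G) (h : G) (p : SmashQ V G @δ) : SmashQ V G @δ :=
  ⟨p.v, p.g * h⟩

/-- The set of arrows of `Q ⋊ G` (with endpoints bundled). -/
abbrev ArrowsOf (δ : ∀ {a b : V}, (a ⟶ b) → G) : Type _ :=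
  Σ p q : SmashQ V G @δ, p ⟶ q

/-- The right action of `h ∈ G` on the arrows of `Q ⋊ G`: `(a ⋊ g)·h = a ⋊ gh`.
It covers the action on vertices, hence `G` acts by quiver automorphisms. -/
def actA (δ : ∀ {a b : V}, (a ⟶ b) → G) (h : G) (s : ArrowsOf @δ) : ArrowsOf @δ :=
  ⟨actV @δ h s.1, actV @δ h s.2.1,
    ⟨s.2.2.1, show s.2.1.g * h = δ s.2.2.1 * (s.1.g * h) by rw [← mul_assoc, ← s.2.2.2]⟩⟩

/-- The orbit relation on vertices of `Q ⋊ G`. -/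
def rV (δ : ∀ {a b : V}, (a ⟶ b) → G) (p q : SmashQ V G @δ) : Prop :=
  ∃ h : G, q = actV @δ h p

/-- The orbit relation on arrows of `Q ⋊ G`. -/
def rA (δ : ∀ {a b : V}, (a ⟶ b) → G) (s t : ArrowsOf @δ) : Prop :=
  ∃ h : G, t = actA @δ h s

/-- The map from vertex orbits of `Q ⋊ G` to vertices of `Q`. -/
def orbV (δ : ∀ {a b : V}, (a ⟶ b) → G) : Quot (rV @δ) → V :=
  Quot.lift (fun p => p.v) (by rintro a b ⟨h, rfl⟩; rfl)

/-- The map from arrow orbits of `Q ⋊ G` to arrows of `Q`. -/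
def orbA (δ : ∀ {a b : V}, (a ⟶ b) → G) : Quot (rA @δ) → Σ a b : V, a ⟶ b :=
  Quot.lift (fun s => ⟨s.1.v, s.2.1.v, s.2.2.1⟩) (by rintro a b ⟨h, rfl⟩; rfl)

private lemma arrowsOf_mk_eq (δ : ∀ {a b : V}, (a ⟶ b) → G) {v w : V} (e : v ⟶ w)
    {g₁ g₂ g₁' g₂' : G} (h1 : g₁ = g₁') (h2 : g₂ = g₂')
    (p : g₂ = δ e * g₁) (p' : g₂' = δ e * g₁') :
    (⟨⟨v, g₁⟩, ⟨w, g₂⟩, ⟨e, p⟩⟩ : ArrowsOf @δ) = ⟨⟨v, g₁'⟩, ⟨w, g₂'⟩, ⟨e, p'⟩⟩ := by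
  subst h1; subst h2; rfl

/-- The right `G`-action `(u ⋊ g)·h = u ⋊ gh` on the smash
coproduct quiver `Q ⋊ G` is a free action by quiver automorphisms, and the
orbit quiver `(Q ⋊ G)/G` is isomorphic to `Q` (the natural maps on vertex
orbits and arrow orbits are bijections commuting with source and target). -/
theorem smash_quiver_orbit (δ : ∀ {a b : V}, (a ⟶ b) → G) :
    -- it is a right action, on vertices and on arrows
    (∀ p : SmashQ V G @δ, actV @δ 1 p = p)
    ∧ (∀ (p : SmashQ V G @δ) (h₁ h₂ : G),
        actV @δ (h₁ * h₂) p = actV @δ h₂ (actV @δ h₁ p))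
    ∧ (∀ s : ArrowsOf @δ, actA @δ 1 s = s)
    ∧ (∀ (s : ArrowsOf @δ) (h₁ h₂ : G),
        actA @δ (h₁ * h₂) s = actA @δ h₂ (actA @δ h₁ s))
    -- the action is by quiver automorphisms: bijective and compatible with s, t
    ∧ (∀ h : G, Function.Bijective (actV @δ h))
    ∧ (∀ h : G, Function.Bijective (actA @δ h))
    ∧ (∀ (h : G) (s : ArrowsOf @δ),
        (actA @δ h s).1 = actV @δ h s.1 ∧ (actA @δ h s).2.1 = actV @δ h s.2.1)
    -- the action is free
    ∧ (∀ (p : SmashQ V G @δ) (h : G), actV @δ h p = p → h = 1)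
    -- the orbit quiver is isomorphic to `Q`
    ∧ Function.Bijective (orbV @δ)
    ∧ Function.Bijective (orbA @δ)
    ∧ (∀ s : ArrowsOf @δ,
        orbV @δ (Quot.mk (rV @δ) s.1) = (orbA @δ (Quot.mk (rA @δ) s)).1
        ∧ orbV @δ (Quot.mk (rV @δ) s.2.1) = (orbA @δ (Quot.mk (rA @δ) s)).2.1) := by
  have hV1 : ∀ p : SmashQ V G @δ, actV @δ 1 p = p := by
    rintro ⟨v, g⟩; simp [actV]
  have hVm : ∀ (p : SmashQ V G @δ) (h₁ h₂ : G),
      actV @δ (h₁ * h₂) p = actV @δ h₂ (actV @δ h₁ p) := by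
    rintro ⟨v, g⟩ h₁ h₂; simp [actV, mul_assoc]
  have hA1 : ∀ s : ArrowsOf @δ, actA @δ 1 s = s := by
    rintro ⟨⟨v, g⟩, ⟨w, g'⟩, e, he⟩
    exact arrowsOf_mk_eq @δ e (mul_one g) (mul_one g') _ he
  have hAm : ∀ (s : ArrowsOf @δ) (h₁ h₂ : G),
      actA @δ (h₁ * h₂) s = actA @δ h₂ (actA @δ h₁ s) := by
    rintro ⟨⟨v, g⟩, ⟨w, g'⟩, e, he⟩ h₁ h₂
    exact arrowsOf_mk_eq @δ e (mul_assoc g h₁ h₂).symm (mul_assoc g' h₁ h₂).symm _ _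
  have hVb : ∀ h : G, Function.Bijective (actV @δ h) := by
    intro h
    refine Function.bijective_iff_has_inverse.2 ⟨actV @δ h⁻¹, ?_, ?_⟩ <;> intro p <;>
      rw [← hVm] <;> simp [hV1]
  have hAb : ∀ h : G, Function.Bijective (actA @δ h) := by
    intro h
    refine Function.bijective_iff_has_inverse.2 ⟨actA @δ h⁻¹, ?_, ?_⟩ <;> intro s <;>
      rw [← hAm] <;> simp [hA1]
  refine ⟨hV1, hVm, hA1, hAm, hVb, hAb, fun h s => ⟨rfl, rfl⟩, ?_, ⟨?_, ?_⟩, ⟨?_, ?_⟩,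
    fun s => ⟨rfl, rfl⟩⟩
  · rintro ⟨v, g⟩ h hp
    have : g * h = g := congrArg SmashQ.g hp
    exact mul_left_cancel (a := g) (by simpa using this)
  · -- orbV injective
    rintro ⟨⟨v, g⟩⟩ ⟨⟨w, g'⟩⟩ hvw
    simp only [orbV] at hvw
    subst hvw
    exact Quot.sound ⟨g⁻¹ * g', by simp [actV]⟩
  · -- orbV surjective
    intro v; exact ⟨Quot.mk _ ⟨v, 1⟩, rfl⟩
  · -- orbA injective
    rintro ⟨⟨⟨v, g⟩, ⟨w, g'⟩, e, he⟩⟩ ⟨⟨⟨v', g₂⟩, ⟨w', g₂'⟩, e', he'⟩⟩ hst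
    simp only [orbA] at hst
    obtain ⟨rfl, h2⟩ := Sigma.mk.inj_iff.1 hst
    obtain ⟨rfl, h3⟩ := Sigma.mk.inj_iff.1 (eq_of_heq h2)
    have he3 : e = e' := eq_of_heq h3
    subst he3
    refine Quot.sound ⟨g⁻¹ * g₂, ?_⟩
    exact (arrowsOf_mk_eq @δ e (by group)
      (by rw [show g' = δ e * g from he, show g₂' = δ e * g₂ from he']; group : g' * (g⁻¹ * g₂) = g₂') _ he').symm
  · -- orbA surjective
    rintro ⟨a, b, e⟩
    exact ⟨Quot.mk _ ⟨⟨a, 1⟩, ⟨b, δ e⟩, e, (mul_one _).symm⟩, rfl⟩
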